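/- Let 0 < d < 2. Define the operator LL⁺_d on W₁(ℝ) by letting LL⁺_d(ρ) be the law of -∑_{i=1}^{D} sᵢ·log((1 - sᵢ·tanh(ηᵢ/2))/2), where D ~ Poisson(d), the sᵢ are independent uniform signs, and the ηᵢ i.i.d. with law ρ, all independent. Then LL⁺_d is a contraction for the Wasserstein-1 metric: W₁(LL⁺_d(ρ), LL⁺_d(ρ')) ≤ (d/2)·W₁(ρ, ρ') for all ρ, ρ' ∈ W₁(ℝ). -/

import Mathlib

open MeasureTheory ProbabilityTheory Real
open scoped NNReal ENNReal

/-- `γ` is a coupling of `ρ` and `ρ'`. -/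
def IsCoupling (γ : Measure (ℝ × ℝ)) (ρ ρ' : Measure ℝ) : Prop :=
  γ.map Prod.fst = ρ ∧ γ.map Prod.snd = ρ'

/-- Wasserstein-1 distance between two probability measures on `ℝ`. -/
noncomputable def W1 (ρ ρ' : Measure ℝ) : ℝ≥0∞ :=
  ⨅ (γ : Measure (ℝ × ℝ)) (_ : IsProbabilityMeasure γ) (_ : IsCoupling γ ρ ρ'),
    ∫⁻ p, ENNReal.ofReal |p.1 - p.2| ∂γ

/-- Codomain family: one `ℕ`-valued variable (the Poisson count) and, for each `n : ℕ`,
two real variables `ηₙ, sₙ`. -/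
abbrev llpCod : Unit ⊕ (ℕ × Fin 2) → Type := Sum.elim (fun _ => ℕ) (fun _ => ℝ)

def llpMS : ∀ i : Unit ⊕ (ℕ × Fin 2), MeasurableSpace (llpCod i)
  | Sum.inl _ => (inferInstance : MeasurableSpace ℕ)
  | Sum.inr _ => (inferInstance : MeasurableSpace ℝ)

def llpFam {Ω : Type*} (D : Ω → ℕ) (η s : ℕ → Ω → ℝ) :
    ∀ i : Unit ⊕ (ℕ × Fin 2), Ω → llpCod i
  | Sum.inl _ => D
  | Sum.inr (n, j) => if j = 0 then η n else s n

/-- The uniform distribution on the two signs `{±1} ⊆ ℝ`. -/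
noncomputable def signLaw : Measure ℝ :=
  (1 / 2 : ℝ≥0∞) • Measure.dirac (1 : ℝ) + (1 / 2 : ℝ≥0∞) • Measure.dirac (-1 : ℝ)

/-- On `(Ω, P)`: `D` is Poisson(`d`), the `sₙ` are uniform signs, the `ηₙ` are i.i.d. with
law `ρ`, all mutually independent; then
`P.map (-∑_{i<D} sᵢ · log((1 - sᵢ·tanh(ηᵢ/2))/2))` realizes `LL⁺_d(ρ)`. -/
structure IsLLpSetup {Ω : Type*} [MeasurableSpace Ω] (P : Measure Ω) (d : ℝ≥0)
    (ρ : Measure ℝ) (D : Ω → ℕ) (η s : ℕ → Ω → ℝ) : Prop where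
  probMeas : IsProbabilityMeasure P
  measD : Measurable D
  measη : ∀ n, Measurable (η n)
  meass : ∀ n, Measurable (s n)
  lawD : P.map D = (poissonPMF d).toMeasure
  lawη : ∀ n, P.map (η n) = ρ
  laws : ∀ n, P.map (s n) = signLaw
  indep : iIndepFun (m := llpMS) (llpFam D η s) P


noncomputable def tau (x u : ℝ) : ℝ := u * Real.log ((1 - u * Real.tanh (x/2)) / 2)

noncomputable def Sp (x : ℝ) : ℝ := Real.log (Real.exp x + 1)

lemma one_sub_tanh (x : ℝ) : (1 - Real.tanh (x/2))/2 = 1/(Real.exp x + 1) := by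
  have hx : Real.exp x = Real.exp (x/2) * Real.exp (x/2) := by
    rw [← Real.exp_add]; ring_nf
  have ha := Real.exp_pos (x/2)
  have hb : Real.exp (x/2) + Real.exp (-(x/2)) > 0 := by positivity
  have hc : Real.exp x + 1 > 0 := by positivity
  rw [Real.tanh_eq_sinh_div_cosh, Real.sinh_eq, Real.cosh_eq, hx]
  rw [Real.exp_neg] at *
  field_simp
  ring

lemma one_add_tanh (x : ℝ) : (1 + Real.tanh (x/2))/2 = Real.exp x/(Real.exp x + 1) := by
  have hx : Real.exp x = Real.exp (x/2) * Real.exp (x/2) := by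
    rw [← Real.exp_add]; ring_nf
  have ha := Real.exp_pos (x/2)
  have hb : Real.exp (x/2) + Real.exp (-(x/2)) > 0 := by positivity
  have hc : Real.exp x + 1 > 0 := by positivity
  rw [Real.tanh_eq_sinh_div_cosh, Real.sinh_eq, Real.cosh_eq, hx]
  rw [Real.exp_neg] at *
  field_simp
  ring

lemma tau_one (x : ℝ) : tau x 1 = -Sp x := by
  have h := one_sub_tanh x
  have hc : Real.exp x + 1 > 0 := by positivity
  rw [tau, Sp, one_mul, one_mul, h, Real.log_div one_ne_zero hc.ne', Real.log_one]
  ring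

lemma tau_neg_one (x : ℝ) : tau x (-1) = Sp x - x := by
  have h := one_add_tanh x
  have hc : Real.exp x + 1 > 0 := by positivity
  have he := Real.exp_pos x
  rw [tau, Sp]
  have : 1 - (-1) * Real.tanh (x/2) = 1 + Real.tanh (x/2) := by ring
  rw [this]
  rw [show (1 + Real.tanh (x/2))/2 = Real.exp x/(Real.exp x + 1) from h,
    Real.log_div he.ne' hc.ne', Real.log_exp]
  ring

lemma Sp_mono : Monotone Sp := fun x y h => by
  have : Real.exp x + 1 ≤ Real.exp y + 1 := by linarith [Real.exp_le_exp.2 h]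
  exact Real.log_le_log (by positivity) this

lemma Sp_sub (x : ℝ) : Sp x - x = Sp (-x) := by
  rw [Sp, Sp]
  rw [show Real.exp (-x) + 1 = (Real.exp x + 1) / Real.exp x by
    rw [Real.exp_neg]; field_simp; ring]
  rw [Real.log_div (by positivity) (Real.exp_ne_zero x), Real.log_exp]

lemma Sp_lip {x y : ℝ} (h : x ≤ y) : Sp y - Sp x ≤ y - x := by
  have h2 : Sp (-y) ≤ Sp (-x) := Sp_mono (by linarith)
  have := Sp_sub x; have := Sp_sub y
  linarith

lemma key_est (x y : ℝ) :
    |tau x 1 - tau y 1| + |tau x (-1) - tau y (-1)| ≤ |x - y| := by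
  rcases le_total x y with h | h
  · have h1 : Sp x ≤ Sp y := Sp_mono h
    have h2 : Sp y - Sp x ≤ y - x := Sp_lip h
    rw [tau_one, tau_one, tau_neg_one, tau_neg_one, abs_of_nonneg (by linarith),
      abs_of_nonneg (by linarith), abs_of_nonpos (by linarith)]
    linarith
  · have h1 : Sp y ≤ Sp x := Sp_mono h
    have h2 : Sp x - Sp y ≤ x - y := Sp_lip h
    rw [tau_one, tau_one, tau_neg_one, tau_neg_one, abs_of_nonpos (by linarith),
      abs_of_nonpos (by linarith), abs_of_nonneg (by linarith)]
    linarith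

lemma measurable_tanh : Measurable Real.tanh := by
  have : Continuous Real.tanh := by
    rw [show Real.tanh = fun x => Real.sinh x / Real.cosh x from funext Real.tanh_eq_sinh_div_cosh]
    exact Real.continuous_sinh.div Real.continuous_cosh fun x => (Real.cosh_pos x).ne'
  exact this.measurable

lemma measurable_tau : Measurable (fun p : ℝ × ℝ => tau p.1 p.2) := by
  unfold tau
  exact measurable_snd.mul ((Real.measurable_log.comp
    (((measurable_const.sub (measurable_snd.mul
      (measurable_tanh.comp (measurable_fst.div_const 2)))).div_const 2))))

instance : IsProbabilityMeasure signLaw := by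
  constructor
  simp [signLaw]
  rw [ENNReal.inv_two_add_inv_two]

lemma lintegral_signLaw (h : ℝ → ℝ≥0∞) :
    ∫⁻ u, h u ∂signLaw = 2⁻¹ * h 1 + 2⁻¹ * h (-1) := by
  rw [signLaw, lintegral_add_measure, lintegral_smul_measure, lintegral_smul_measure,
    lintegral_dirac, lintegral_dirac]
  norm_num

lemma measurable_taudiff :
    Measurable (fun q : (ℝ × ℝ) × ℝ => ENNReal.ofReal |tau q.1.1 q.2 - tau q.1.2 q.2|) := by
  apply Measurable.ennreal_ofReal
  apply Measurable.abs
  exact (measurable_tau.comp ((measurable_fst.fst).prodMk measurable_snd)).sub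
    (measurable_tau.comp ((measurable_fst.snd).prodMk measurable_snd))

lemma coord_bound (γ : Measure (ℝ × ℝ)) [SigmaFinite γ] :
    ∫⁻ q : (ℝ × ℝ) × ℝ, ENNReal.ofReal |tau q.1.1 q.2 - tau q.1.2 q.2| ∂(γ.prod signLaw)
      ≤ 2⁻¹ * ∫⁻ p : ℝ × ℝ, ENNReal.ofReal |p.1 - p.2| ∂γ := by
  rw [lintegral_prod _ measurable_taudiff.aemeasurable]
  rw [← lintegral_const_mul' _ _ (by norm_num : (2⁻¹ : ℝ≥0∞) ≠ ∞)]
  apply lintegral_mono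
  intro p
  dsimp only
  rw [lintegral_signLaw (fun u => ENNReal.ofReal |tau p.1 u - tau p.2 u|)]
  have h1 : ENNReal.ofReal |tau p.1 1 - tau p.2 1| + ENNReal.ofReal |tau p.1 (-1) - tau p.2 (-1)|
      ≤ ENNReal.ofReal |p.1 - p.2| := by
    rw [← ENNReal.ofReal_add (abs_nonneg _) (abs_nonneg _)]
    exact ENNReal.ofReal_le_ofReal (key_est p.1 p.2)
  calc 2⁻¹ * ENNReal.ofReal |tau p.1 1 - tau p.2 1|
        + 2⁻¹ * ENNReal.ofReal |tau p.1 (-1) - tau p.2 (-1)|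
      = 2⁻¹ * (ENNReal.ofReal |tau p.1 1 - tau p.2 1|
        + ENNReal.ofReal |tau p.1 (-1) - tau p.2 (-1)|) := by ring
    _ ≤ 2⁻¹ * ENNReal.ofReal |p.1 - p.2| := by
        exact mul_le_mul_right h1 _

noncomputable def G (n : ℕ) (v : Fin n → ℝ × ℝ) : ℝ := -∑ i, tau (v i).1 (v i).2

lemma measurable_G (n : ℕ) : Measurable (G n) := by
  apply Measurable.neg
  apply Finset.measurable_sum
  intro i _
  exact measurable_tau.comp (measurable_pi_apply i)

lemma pi_map_eval {X : Type*} [MeasurableSpace X] (m : Measure X) [IsProbabilityMeasure m]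
    (n : ℕ) (i : Fin n) :
    (Measure.pi (fun _ : Fin n => m)).map (fun v => v i) = m := by
  ext A hA
  rw [Measure.map_apply (measurable_pi_apply i) hA]
  have : (fun v : Fin n → X => v i) ⁻¹' A
      = Set.pi Set.univ (fun j => if h : j = i then A else Set.univ) := by
    ext v
    simp only [Set.mem_preimage, Set.mem_pi, Set.mem_univ, forall_true_left]
    constructor
    · intro hv j; by_cases h : j = i <;> simp [h, hv]
    · intro hv; have := hv i; simpa using this
  rw [this, Measure.pi_pi]
  rw [Finset.prod_eq_single i (fun j _ h => by simp [h]) (by simp)]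
  simp

lemma G_diff_bound (n : ℕ) (v : Fin n → (ℝ × ℝ) × ℝ) :
    |G n (fun i => ((v i).1.1, (v i).2)) - G n (fun i => ((v i).1.2, (v i).2))|
      ≤ ∑ i, |tau (v i).1.1 (v i).2 - tau (v i).1.2 (v i).2| := by
  rw [G, G, neg_sub_neg, ← Finset.sum_sub_distrib]
  exact (Finset.abs_sum_le_sum_abs _ _).trans
    (le_of_eq (Finset.sum_congr rfl fun i _ => abs_sub_comm _ _))

lemma poisson_mean (d : ℝ≥0) : ∑' n : ℕ, (n : ℝ≥0∞) * (poissonPMF d) n = d := by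
  rw [tsum_eq_zero_add' ENNReal.summable]
  simp only [Nat.cast_zero, zero_mul, zero_add]
  have : ∀ m : ℕ, ((m + 1 : ℕ) : ℝ≥0∞) * (poissonPMF d) (m + 1)
      = (d : ℝ≥0∞) * (poissonPMF d) m := by
    intro m
    have happ : ∀ k : ℕ, (poissonPMF d) k = ENNReal.ofReal (poissonPMFReal d k) := fun k => rfl
    rw [happ, happ, ← ENNReal.ofReal_natCast (m+1), ← ENNReal.ofReal_mul (by positivity)]
    rw [show (d : ℝ≥0∞) = ENNReal.ofReal (d : ℝ) by simp, ← ENNReal.ofReal_mul (by positivity)]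
    congr 1
    rw [poissonPMFReal, poissonPMFReal, Nat.factorial_succ]
    push_cast
    have : ((m : ℝ) + 1) ≠ 0 := by positivity
    have h2 : (Nat.factorial m : ℝ) ≠ 0 := Nat.cast_ne_zero.mpr (Nat.factorial_ne_zero m)
    field_simp
    ring
  rw [tsum_congr this, ENNReal.tsum_mul_left, (poissonPMF d).tsum_coe, mul_one]
abbrev TT (n : ℕ) : Finset (Unit ⊕ ℕ × Fin 2) :=
  (Finset.range n ×ˢ (Finset.univ : Finset (Fin 2))).image Sum.inr

lemma mem_TT {n k : ℕ} (c : Fin 2) (hk : k < n) : Sum.inr (k, c) ∈ TT n := by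
  simp [TT, Finset.mem_image, Finset.mem_product, Finset.mem_range, hk]

section Setup
variable {Ω : Type*} [MeasurableSpace Ω] {P : Measure Ω} {d : ℝ≥0} {ρ : Measure ℝ}
  {D : Ω → ℕ} {η s : ℕ → Ω → ℝ}

lemma measurable_llpFam (hD : Measurable D) (hη : ∀ n, Measurable (η n))
    (hs : ∀ n, Measurable (s n)) :
    ∀ i, @Measurable Ω (llpCod i) _ (llpMS i) (llpFam D η s i) := by
  rintro (⟨⟩ | ⟨k, c⟩)
  · exact hD
  · show Measurable (if c = 0 then η k else s k)
    split_ifs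
    · exact hη k
    · exact hs k

lemma indep_D_vec (hst : IsLLpSetup P d ρ D η s) (n : ℕ) :
    IndepFun D (fun ω (i : Fin n) => (η i ω, s i ω)) P := by
  letI : ∀ i, MeasurableSpace (llpCod i) := llpMS
  classical
  have hmeas : ∀ i, Measurable (llpFam D η s i) :=
    measurable_llpFam hst.measD hst.measη hst.meass
  have hdisj : Disjoint ({Sum.inl ()} : Finset (Unit ⊕ ℕ × Fin 2)) (TT n) := by
    simp [Finset.disjoint_left, TT]
  have h := hst.indep.indepFun_finset {Sum.inl ()} (TT n) hdisj hmeas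
  let φ : (∀ i : ({Sum.inl ()} : Finset (Unit ⊕ ℕ × Fin 2)), llpCod i) → ℕ :=
    fun x => x ⟨Sum.inl (), Finset.mem_singleton_self _⟩
  let ψ : (∀ i : (TT n), llpCod i) → (Fin n → ℝ × ℝ) :=
    fun x i => (x ⟨Sum.inr ((i : ℕ), 0), mem_TT 0 i.isLt⟩,
                x ⟨Sum.inr ((i : ℕ), 1), mem_TT 1 i.isLt⟩)
  have hφ : Measurable φ := measurable_pi_apply _
  have hψ : Measurable ψ := measurable_pi_lambda _ fun i =>
    Measurable.prodMk (measurable_pi_apply _) (measurable_pi_apply _)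
  have h2 := h.comp hφ hψ
  have e1 : (φ ∘ fun a (i : ({Sum.inl ()} : Finset (Unit ⊕ ℕ × Fin 2))) => llpFam D η s i a)
      = D := rfl
  have e2 : (ψ ∘ fun a (i : (TT n)) => llpFam D η s i a)
      = fun ω (i : Fin n) => (η i ω, s i ω) := by
    funext ω
    funext i
    show (llpFam D η s (Sum.inr ((i : ℕ), 0)) ω, llpFam D η s (Sum.inr ((i : ℕ), 1)) ω) = _
    simp [llpFam]
  rwa [e1, e2] at h2

end Setup

section Setup
variable {Ω : Type*} [MeasurableSpace Ω] {P : Measure Ω} {d : ℝ≥0} {ρ : Measure ℝ}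
  {D : Ω → ℕ} {η s : ℕ → Ω → ℝ}

lemma measurable_vec (hη : ∀ n, Measurable (η n)) (hs : ∀ n, Measurable (s n)) (n : ℕ) :
    Measurable (fun ω => fun i : Fin n => (η i ω, s i ω)) :=
  measurable_pi_lambda _ fun i => ((hη i).prodMk (hs i))

lemma vector_law (hst : IsLLpSetup P d ρ D η s) [IsProbabilityMeasure ρ] (n : ℕ) :
    P.map (fun ω => fun i : Fin n => (η i ω, s i ω))
      = Measure.pi (fun _ : Fin n => ρ.prod signLaw) := by
  classical
  letI : ∀ i, MeasurableSpace (llpCod i) := llpMS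
  have hP : IsProbabilityMeasure P := hst.probMeas
  refine (Measure.pi_eq_generateFrom
    (C := fun _ => Set.image2 (· ×ˢ ·) {A : Set ℝ | MeasurableSet A} {B : Set ℝ | MeasurableSet B})
    (fun _ => generateFrom_prod) (fun _ => isPiSystem_prod)
    (fun _ => ⟨fun _ => Set.univ ×ˢ Set.univ,
        fun _ => Set.mem_image2_of_mem (Set.mem_setOf.mpr MeasurableSet.univ)
          (Set.mem_setOf.mpr MeasurableSet.univ),
        fun _ => by simp [measure_lt_top], by simp [Set.iUnion_const]⟩) ?_).symm
  intro u hu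
  choose A hA B hB hAB using fun i => Set.mem_image2.mp (hu i)
  have hA' : ∀ i, MeasurableSet (A i) := hA
  have hB' : ∀ i, MeasurableSet (B i) := hB
  have huMeas : ∀ i, MeasurableSet (u i) := fun i => by
    rw [← hAB i]; exact (hA' i).prod (hB' i)
  rw [Measure.map_apply (measurable_vec hst.measη hst.meass n) (MeasurableSet.univ_pi huMeas)]
  let E : ∀ j : Unit ⊕ ℕ × Fin 2, Set (llpCod j) := fun j =>
    match j with
    | Sum.inl _ => Set.univ
    | Sum.inr (k, c) =>
        if h : k < n then (if c = 0 then A ⟨k, h⟩ else B ⟨k, h⟩) else Set.univ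
  have hE : ∀ j, j ∈ TT n → MeasurableSet[llpMS j] (E j) := by
    rintro (⟨⟩ | ⟨k, c⟩) _
    · exact MeasurableSet.univ
    · show MeasurableSet (E (Sum.inr (k, c)))
      by_cases h : k < n
      · by_cases hc : c = 0
        · simp [E, h, hc]; exact hA' ⟨k, h⟩
        · simp [E, h, hc]; exact hB' ⟨k, h⟩
      · simp [E, h]; exact MeasurableSet.univ
  have hset : (fun ω => fun i : Fin n => (η i ω, s i ω)) ⁻¹' Set.pi Set.univ u
      = ⋂ j ∈ TT n, llpFam D η s j ⁻¹' E j := by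
    ext ω
    simp only [Set.mem_preimage, Set.mem_pi, Set.mem_univ, forall_true_left, Set.mem_iInter,
      TT, Finset.mem_image, Finset.mem_product, Finset.mem_range, Finset.mem_univ, and_true]
    constructor
    · rintro hv j ⟨⟨k, c⟩, hk, rfl⟩
      have hm : (η k ω, s k ω) ∈ u ⟨k, hk⟩ := hv ⟨k, hk⟩
      rw [← hAB ⟨k, hk⟩] at hm
      show llpFam D η s (Sum.inr (k, c)) ω ∈ E (Sum.inr (k, c))
      by_cases hc : c = 0
      · subst hc; simp [llpFam, E, hk]; exact hm.1
      · have hc1 : c = 1 := by omega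
        subst hc1; simp [llpFam, E, hk]; exact hm.2
    · intro hv i
      have h0 := hv (Sum.inr ((i : ℕ), 0)) ⟨((i : ℕ), 0), i.isLt, rfl⟩
      have h1 := hv (Sum.inr ((i : ℕ), 1)) ⟨((i : ℕ), 1), i.isLt, rfl⟩
      rw [← hAB i]
      constructor
      · simp [llpFam, E, i.isLt, Fin.eta] at h0; exact h0
      · simp [llpFam, E, i.isLt, Fin.eta] at h1; exact h1
  rw [hset, hst.indep.measure_inter_preimage_eq_mul (TT n) hE]
  rw [Finset.prod_image (fun a _ b _ h => Sum.inr.inj h), Finset.prod_product]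
  have hterm : ∀ k ∈ Finset.range n, ∀ c : Fin 2,
      P (llpFam D η s (Sum.inr (k, c)) ⁻¹' E (Sum.inr (k, c)))
        = if h : k < n then (if c = 0 then ρ (A ⟨k, h⟩) else signLaw (B ⟨k, h⟩)) else 1 := by
    intro k hk c
    rw [Finset.mem_range] at hk
    rw [dif_pos hk]
    by_cases hc : c = 0
    · subst hc
      rw [if_pos rfl]
      rw [show llpFam D η s (Sum.inr (k, 0)) = η k by simp [llpFam],
        show E (Sum.inr (k, 0)) = A ⟨k, hk⟩ by simp [E, hk],
        ← hst.lawη k, Measure.map_apply (hst.measη k) (hA' _)]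
      rfl
    · have hc1 : c = 1 := by omega
      subst hc1
      rw [if_neg (by decide)]
      rw [show llpFam D η s (Sum.inr (k, 1)) = s k by simp [llpFam],
        show E (Sum.inr (k, 1)) = B ⟨k, hk⟩ by simp [E, hk],
        ← hst.laws k, Measure.map_apply (hst.meass k) (hB' _)]
      rfl
  calc ∏ k ∈ Finset.range n, ∏ c : Fin 2,
        P (llpFam D η s (Sum.inr (k, c)) ⁻¹' E (Sum.inr (k, c)))
      = ∏ k ∈ Finset.range n,
          (if h : k < n then ρ (A ⟨k, h⟩) * signLaw (B ⟨k, h⟩) else 1) := by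
        refine Finset.prod_congr rfl fun k hk => ?_
        rw [Fin.prod_univ_two, hterm k hk 0, hterm k hk 1]
        rw [Finset.mem_range] at hk
        simp [hk]
    _ = ∏ i : Fin n, (ρ.prod signLaw) (u i) := by
        rw [Finset.prod_range
          (f := fun k => if h : k < n then ρ (A ⟨k, h⟩) * signLaw (B ⟨k, h⟩) else 1)]
        refine Finset.prod_congr rfl fun i _ => ?_
        rw [dif_pos i.isLt, ← hAB i, Measure.prod_prod]

end Setup

section Setup
variable {Ω : Type*} [MeasurableSpace Ω] {P : Measure Ω} {d : ℝ≥0} {ρ : Measure ℝ}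
  {D : Ω → ℕ} {η s : ℕ → Ω → ℝ}

lemma measurable_gfun (hη : ∀ n, Measurable (η n)) (hs : ∀ n, Measurable (s n)) (n : ℕ) :
    Measurable (fun ω => -∑ i ∈ Finset.range n, tau (η i ω) (s i ω)) := by
  apply Measurable.neg
  apply Finset.measurable_sum
  intro i _
  exact measurable_tau.comp ((hη i).prodMk (hs i))

lemma gfun_eq (n : ℕ) : (fun ω => -∑ i ∈ Finset.range n, tau (η i ω) (s i ω))
    = G n ∘ (fun ω => fun i : Fin n => (η i ω, s i ω)) := by
  funext ω
  show _ = -∑ i : Fin n, tau (η i ω) (s i ω)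
  rw [Finset.sum_range]

lemma law_eq (hst : IsLLpSetup P d ρ D η s) [IsProbabilityMeasure ρ]
    {A : Set ℝ} (hA : MeasurableSet A) :
    P.map (fun ω => -∑ i ∈ Finset.range (D ω),
        s i ω * Real.log ((1 - s i ω * Real.tanh (η i ω / 2)) / 2)) A
      = ∑' n : ℕ, (poissonPMF d) n
          * ((Measure.pi fun _ : Fin n => ρ.prod signLaw).map (G n)) A := by
  have hP : IsProbabilityMeasure P := hst.probMeas
  set gf : ℕ → Ω → ℝ := fun n ω => -∑ i ∈ Finset.range n, tau (η i ω) (s i ω) with hgf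
  have hgmeas : ∀ n, Measurable (gf n) := measurable_gfun hst.measη hst.meass
  have hfeq : (fun ω => -∑ i ∈ Finset.range (D ω),
      s i ω * Real.log ((1 - s i ω * Real.tanh (η i ω / 2)) / 2)) = fun ω => gf (D ω) ω := rfl
  have hf : Measurable (fun ω => gf (D ω) ω) := by
    have h1 : Measurable (fun p : Ω × ℕ => gf p.2 p.1) :=
      measurable_from_prod_countable_left fun n => hgmeas n
    exact h1.comp (measurable_id.prodMk hst.measD)
  rw [hfeq, Measure.map_apply hf hA]
  have hpart : (fun ω => gf (D ω) ω) ⁻¹' A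
      = ⋃ n : ℕ, ((gf n ⁻¹' A) ∩ (D ⁻¹' {n})) := by
    ext ω
    simp only [Set.mem_preimage, Set.mem_iUnion, Set.mem_inter_iff, Set.mem_singleton_iff]
    constructor
    · intro h; exact ⟨D ω, h, rfl⟩
    · rintro ⟨n, h, rfl⟩; exact h
  rw [hpart, measure_iUnion]
  · refine tsum_congr fun n => ?_
    have e : gf n = G n ∘ (fun ω => fun i : Fin n => (η i ω, s i ω)) := gfun_eq n
    have hind : IndepFun (gf n) D P := by
      have h := ((indep_D_vec hst n).symm).comp (measurable_G n) measurable_id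
      rw [Function.id_comp] at h
      rw [e]; exact h
    rw [hind.measure_inter_preimage_eq_mul A {n} hA (measurableSet_singleton n)]
    have h1 : P (gf n ⁻¹' A) = ((Measure.pi fun _ : Fin n => ρ.prod signLaw).map (G n)) A := by
      rw [e, Set.preimage_comp,
        ← Measure.map_apply (measurable_vec hst.measη hst.meass n) ((measurable_G n) hA),
        vector_law hst n, ← Measure.map_apply (measurable_G n) hA]
    have h2 : P (D ⁻¹' {n}) = (poissonPMF d) n := by
      rw [← Measure.map_apply hst.measD (measurableSet_singleton n), hst.lawD,
        PMF.toMeasure_apply_singleton _ _ (measurableSet_singleton n)]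
    rw [h1, h2, mul_comm]
  · intro m n hmn
    simp only [Function.onFun]
    apply Set.disjoint_left.mpr
    rintro ω ⟨_, hm⟩ ⟨_, hn⟩
    exact hmn (by simp only [Set.mem_preimage, Set.mem_singleton_iff] at hm hn; omega)
  · intro n
    exact (hgmeas n hA).inter (hst.measD (measurableSet_singleton n))

end Setup

lemma pi_map_coord {X Y : Type*} [MeasurableSpace X] [MeasurableSpace Y] (m : Measure X)
    [IsProbabilityMeasure m] (h : X → Y) (hh : Measurable h) (n : ℕ) :
    (Measure.pi fun _ : Fin n => m).map (fun v (i : Fin n) => h (v i))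
      = Measure.pi fun _ : Fin n => m.map h := by
  haveI : IsProbabilityMeasure (m.map h) := Measure.isProbabilityMeasure_map hh.aemeasurable
  refine (Measure.pi_eq fun u hu => ?_).symm
  have hm : Measurable (fun v : Fin n → X => fun i : Fin n => h (v i)) :=
    measurable_pi_lambda _ fun i => hh.comp (measurable_pi_apply i)
  rw [Measure.map_apply hm (MeasurableSet.univ_pi hu)]
  have he : (fun v : Fin n → X => fun i : Fin n => h (v i)) ⁻¹' Set.pi Set.univ u
      = Set.pi Set.univ (fun i => h ⁻¹' u i) := by
    ext v; simp [Set.mem_pi]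
  rw [he, Measure.pi_pi]
  exact Finset.prod_congr rfl fun i _ => (Measure.map_apply hh (hu i)).symm

lemma lintegral_coord {X : Type*} [MeasurableSpace X] (m : Measure X) [IsProbabilityMeasure m]
    (n : ℕ) (i : Fin n) (h : X → ℝ≥0∞) (hh : Measurable h) :
    ∫⁻ v, h (v i) ∂(Measure.pi fun _ : Fin n => m) = ∫⁻ x, h x ∂m := by
  conv_rhs => rw [← pi_map_eval m n i]
  rw [lintegral_map hh (measurable_pi_apply i)]

lemma mul_iInf_aux {ι : Sort*} {a : ℝ≥0∞} (ha : a ≠ 0) (ha' : a ≠ ∞) (f : ι → ℝ≥0∞) :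
    a * ⨅ i, f i = ⨅ i, a * f i :=
  ENNReal.mul_iInf' (fun h => absurd h ha') (fun h => absurd h ha)

lemma kappa_marginal {Ω : Type*} [MeasurableSpace Ω] {P : Measure Ω} {d : ℝ≥0} {ρ : Measure ℝ}
    {D : Ω → ℕ} {η s : ℕ → Ω → ℝ} (hst : IsLLpSetup P d ρ D η s) [IsProbabilityMeasure ρ]
    (γ : Measure (ℝ × ℝ)) [IsProbabilityMeasure γ] (e : ℝ × ℝ → ℝ) (he : Measurable e)
    (hγe : γ.map e = ρ) {A : Set ℝ} (hA : MeasurableSet A) (n : ℕ) :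
    ((Measure.pi fun _ : Fin n => γ.prod signLaw).map
        (fun v => G n (fun i : Fin n => (e (v i).1, (v i).2)))) A
      = ((Measure.pi fun _ : Fin n => ρ.prod signLaw).map (G n)) A := by
  have hq : Measurable (fun q : (ℝ × ℝ) × ℝ => (e q.1, q.2)) :=
    (he.comp measurable_fst).prodMk measurable_snd
  have hpl : (γ.prod signLaw).map (fun q : (ℝ × ℝ) × ℝ => (e q.1, q.2)) = ρ.prod signLaw := by
    have h2 := Measure.map_prod_map γ signLaw he measurable_id
    rw [Measure.map_id, hγe] at h2
    rw [show (fun q : (ℝ × ℝ) × ℝ => (e q.1, q.2)) = Prod.map e id from rfl, ← h2]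
  have hcoord : Measurable (fun v : Fin n → ((ℝ × ℝ) × ℝ) => fun i : Fin n => (e (v i).1, (v i).2)) :=
    measurable_pi_lambda _ fun i => hq.comp (measurable_pi_apply i)
  have hGc : Measurable (fun v : Fin n → ((ℝ × ℝ) × ℝ) => G n (fun i : Fin n => (e (v i).1, (v i).2))) :=
    (measurable_G n).comp hcoord
  rw [Measure.map_apply hGc hA, Measure.map_apply (measurable_G n) hA]
  have hpre : (fun v : Fin n → ((ℝ × ℝ) × ℝ) => G n (fun i : Fin n => (e (v i).1, (v i).2))) ⁻¹' A
      = (fun v (i : Fin n) => (e (v i).1, (v i).2)) ⁻¹' (G n ⁻¹' A) := rfl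
  rw [hpre, ← Measure.map_apply hcoord ((measurable_G n) hA),
    pi_map_coord (γ.prod signLaw) _ hq n]
  congr 1
  exact congrArg Measure.pi (funext fun _ => hpl)

lemma measurable_HnL (n : ℕ) :
    Measurable (fun v : Fin n → (ℝ × ℝ) × ℝ => G n (fun i : Fin n => ((v i).1.1, (v i).2))) :=
  (measurable_G n).comp (measurable_pi_lambda _ fun i =>
    ((measurable_pi_apply i).fst.fst).prodMk (measurable_pi_apply i).snd)

lemma measurable_HnR (n : ℕ) :
    Measurable (fun v : Fin n → (ℝ × ℝ) × ℝ => G n (fun i : Fin n => ((v i).1.2, (v i).2))) :=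
  (measurable_G n).comp (measurable_pi_lambda _ fun i =>
    ((measurable_pi_apply i).fst.snd).prodMk (measurable_pi_apply i).snd)

lemma measurable_Hn (n : ℕ) :
    Measurable (fun v : Fin n → (ℝ × ℝ) × ℝ =>
      (G n (fun i : Fin n => ((v i).1.1, (v i).2)), G n (fun i : Fin n => ((v i).1.2, (v i).2)))) :=
  (measurable_HnL n).prodMk (measurable_HnR n)

lemma measurable_absdiff : Measurable (fun p : ℝ × ℝ => ENNReal.ofReal |p.1 - p.2|) :=
  ((measurable_fst.sub measurable_snd).abs).ennreal_ofReal

lemma inner_cost (γ : Measure (ℝ × ℝ)) [IsProbabilityMeasure γ] (n : ℕ) :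
    ∫⁻ p, ENNReal.ofReal |p.1 - p.2|
        ∂((Measure.pi fun _ : Fin n => γ.prod signLaw).map (fun v =>
          (G n (fun i : Fin n => ((v i).1.1, (v i).2)),
           G n (fun i : Fin n => ((v i).1.2, (v i).2)))))
      ≤ (n : ℝ≥0∞) * ∫⁻ q : (ℝ × ℝ) × ℝ,
          ENNReal.ofReal |tau q.1.1 q.2 - tau q.1.2 q.2| ∂(γ.prod signLaw) := by
  rw [lintegral_map measurable_absdiff (measurable_Hn n)]
  have step1 : ∫⁻ v, ENNReal.ofReal |G n (fun i : Fin n => ((v i).1.1, (v i).2))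
        - G n (fun i : Fin n => ((v i).1.2, (v i).2))| ∂(Measure.pi fun _ : Fin n => γ.prod signLaw)
      ≤ ∫⁻ v, ∑ i : Fin n, ENNReal.ofReal |tau ((v i).1.1) ((v i).2) - tau ((v i).1.2) ((v i).2)|
          ∂(Measure.pi fun _ : Fin n => γ.prod signLaw) := by
    apply lintegral_mono
    intro v
    calc ENNReal.ofReal |G n (fun i : Fin n => ((v i).1.1, (v i).2))
          - G n (fun i : Fin n => ((v i).1.2, (v i).2))|
        ≤ ENNReal.ofReal (∑ i : Fin n,
            |tau ((v i).1.1) ((v i).2) - tau ((v i).1.2) ((v i).2)|) :=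
          ENNReal.ofReal_le_ofReal (G_diff_bound n v)
      _ = ∑ i : Fin n, ENNReal.ofReal
            |tau ((v i).1.1) ((v i).2) - tau ((v i).1.2) ((v i).2)| :=
          ENNReal.ofReal_sum_of_nonneg (fun i _ => abs_nonneg _)
  refine le_trans step1 ?_
  rw [lintegral_finset_sum (f := fun (i : Fin n) (v : Fin n → (ℝ × ℝ) × ℝ) =>
    ENNReal.ofReal |tau (v i).1.1 (v i).2 - tau (v i).1.2 (v i).2|) _
    (fun i _ => measurable_taudiff.comp (measurable_pi_apply i))]
  have heach : ∀ i : Fin n, ∫⁻ v, ENNReal.ofReal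
        |tau ((v i).1.1) ((v i).2) - tau ((v i).1.2) ((v i).2)|
          ∂(Measure.pi fun _ : Fin n => γ.prod signLaw)
      = ∫⁻ q : (ℝ × ℝ) × ℝ, ENNReal.ofReal |tau q.1.1 q.2 - tau q.1.2 q.2| ∂(γ.prod signLaw) :=
    fun i => lintegral_coord (γ.prod signLaw) n i _ measurable_taudiff
  rw [Finset.sum_congr rfl (fun i _ => heach i), Finset.sum_const, Finset.card_univ,
    Fintype.card_fin, nsmul_eq_mul]

set_option maxHeartbeats 2000000 in
/-- For `0 < d < 2`, the operator `LL⁺_d` is a contraction for the Wasserstein-1 metric: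
`W₁(LL⁺_d ρ, LL⁺_d ρ') ≤ (d/2)·W₁(ρ, ρ')`. -/
theorem stmt_9 (d : ℝ≥0) (hd0 : 0 < d) (hd2 : (d : ℝ) < 2)
    (ρ ρ' : Measure ℝ) [IsProbabilityMeasure ρ] [IsProbabilityMeasure ρ']
    (hρ : ∫⁻ x, ENNReal.ofReal |x| ∂ρ < ∞)
    (hρ' : ∫⁻ x, ENNReal.ofReal |x| ∂ρ' < ∞)
    {Ω Ω' : Type*} [MeasurableSpace Ω] [MeasurableSpace Ω']
    (P : Measure Ω) (P' : Measure Ω')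
    (D : Ω → ℕ) (η s : ℕ → Ω → ℝ) (D' : Ω' → ℕ) (η' t : ℕ → Ω' → ℝ)
    (hset : IsLLpSetup P d ρ D η s) (hset' : IsLLpSetup P' d ρ' D' η' t) :
    W1
      (P.map (fun ω => -∑ i ∈ Finset.range (D ω),
        s i ω * Real.log ((1 - s i ω * Real.tanh (η i ω / 2)) / 2)))
      (P'.map (fun ω => -∑ i ∈ Finset.range (D' ω),
        t i ω * Real.log ((1 - t i ω * Real.tanh (η' i ω / 2)) / 2))) ≤
      ((d : ℝ≥0∞) / 2) * W1 ρ ρ' := by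
  have key : ∀ γ : Measure (ℝ × ℝ), IsProbabilityMeasure γ → IsCoupling γ ρ ρ' →
      W1
        (P.map (fun ω => -∑ i ∈ Finset.range (D ω),
          s i ω * Real.log ((1 - s i ω * Real.tanh (η i ω / 2)) / 2)))
        (P'.map (fun ω => -∑ i ∈ Finset.range (D' ω),
          t i ω * Real.log ((1 - t i ω * Real.tanh (η' i ω / 2)) / 2)))
        ≤ ((d : ℝ≥0∞) / 2) * ∫⁻ p, ENNReal.ofReal |p.1 - p.2| ∂γ := by
    intro γ hγp hγc
    haveI := hγp
    haveI hμprob : ∀ n : ℕ, IsProbabilityMeasure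
        ((Measure.pi fun _ : Fin n => γ.prod signLaw).map (fun v =>
          (G n (fun i : Fin n => ((v i).1.1, (v i).2)),
           G n (fun i : Fin n => ((v i).1.2, (v i).2))))) :=
      fun n => Measure.isProbabilityMeasure_map (measurable_Hn n).aemeasurable
    haveI hκ : IsProbabilityMeasure (Measure.sum (fun n : ℕ => poissonPMF d n •
        ((Measure.pi fun _ : Fin n => γ.prod signLaw).map (fun v =>
          (G n (fun i : Fin n => ((v i).1.1, (v i).2)),
           G n (fun i : Fin n => ((v i).1.2, (v i).2))))))) := by
      constructor
      rw [Measure.sum_apply _ MeasurableSet.univ]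
      simp only [Measure.smul_apply, measure_univ, smul_eq_mul, mul_one]
      exact (poissonPMF d).tsum_coe
    have hmargL : (Measure.sum (fun n : ℕ => poissonPMF d n •
        ((Measure.pi fun _ : Fin n => γ.prod signLaw).map (fun v =>
          (G n (fun i : Fin n => ((v i).1.1, (v i).2)),
           G n (fun i : Fin n => ((v i).1.2, (v i).2))))))).map Prod.fst
        = P.map (fun ω => -∑ i ∈ Finset.range (D ω),
            s i ω * Real.log ((1 - s i ω * Real.tanh (η i ω / 2)) / 2)) := by
      ext A hA
      rw [Measure.map_apply measurable_fst hA, Measure.sum_apply _ (measurable_fst hA),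
        law_eq hset hA]
      refine tsum_congr fun n => ?_
      rw [Measure.smul_apply, smul_eq_mul]
      congr 1
      rw [Measure.map_apply (measurable_Hn n) (measurable_fst hA)]
      rw [show (fun v : Fin n → (ℝ × ℝ) × ℝ =>
          (G n (fun i : Fin n => ((v i).1.1, (v i).2)),
           G n (fun i : Fin n => ((v i).1.2, (v i).2)))) ⁻¹' (Prod.fst ⁻¹' A)
        = (fun v : Fin n → (ℝ × ℝ) × ℝ =>
            G n (fun i : Fin n => (Prod.fst (v i).1, (v i).2))) ⁻¹' A from rfl]
      rw [← Measure.map_apply (by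
        exact (measurable_G n).comp (measurable_pi_lambda _ fun i =>
          ((measurable_pi_apply i).fst.fst).prodMk (measurable_pi_apply i).snd)) hA]
      exact kappa_marginal hset γ Prod.fst measurable_fst hγc.1 hA n
    have hmargR : (Measure.sum (fun n : ℕ => poissonPMF d n •
        ((Measure.pi fun _ : Fin n => γ.prod signLaw).map (fun v =>
          (G n (fun i : Fin n => ((v i).1.1, (v i).2)),
           G n (fun i : Fin n => ((v i).1.2, (v i).2))))))).map Prod.snd
        = P'.map (fun ω => -∑ i ∈ Finset.range (D' ω),
            t i ω * Real.log ((1 - t i ω * Real.tanh (η' i ω / 2)) / 2)) := by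
      ext A hA
      rw [Measure.map_apply measurable_snd hA, Measure.sum_apply _ (measurable_snd hA),
        law_eq hset' hA]
      refine tsum_congr fun n => ?_
      rw [Measure.smul_apply, smul_eq_mul]
      congr 1
      rw [Measure.map_apply (measurable_Hn n) (measurable_snd hA)]
      rw [show (fun v : Fin n → (ℝ × ℝ) × ℝ =>
          (G n (fun i : Fin n => ((v i).1.1, (v i).2)),
           G n (fun i : Fin n => ((v i).1.2, (v i).2)))) ⁻¹' (Prod.snd ⁻¹' A)
        = (fun v : Fin n → (ℝ × ℝ) × ℝ =>
            G n (fun i : Fin n => (Prod.snd (v i).1, (v i).2))) ⁻¹' A from rfl]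
      rw [← Measure.map_apply (by
        exact (measurable_G n).comp (measurable_pi_lambda _ fun i =>
          ((measurable_pi_apply i).fst.snd).prodMk (measurable_pi_apply i).snd)) hA]
      exact kappa_marginal hset' γ Prod.snd measurable_snd hγc.2 hA n
    have hcost : ∫⁻ p, ENNReal.ofReal |p.1 - p.2|
          ∂(Measure.sum (fun n : ℕ => poissonPMF d n •
            ((Measure.pi fun _ : Fin n => γ.prod signLaw).map (fun v =>
              (G n (fun i : Fin n => ((v i).1.1, (v i).2)),
               G n (fun i : Fin n => ((v i).1.2, (v i).2)))))))
        ≤ ((d : ℝ≥0∞) / 2) * ∫⁻ p, ENNReal.ofReal |p.1 - p.2| ∂γ := by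
      rw [lintegral_sum_measure]
      calc ∑' n : ℕ, ∫⁻ p, ENNReal.ofReal |p.1 - p.2|
            ∂(poissonPMF d n • ((Measure.pi fun _ : Fin n => γ.prod signLaw).map (fun v =>
              (G n (fun i : Fin n => ((v i).1.1, (v i).2)),
               G n (fun i : Fin n => ((v i).1.2, (v i).2))))))
          = ∑' n : ℕ, poissonPMF d n * ∫⁻ p, ENNReal.ofReal |p.1 - p.2|
            ∂((Measure.pi fun _ : Fin n => γ.prod signLaw).map (fun v =>
              (G n (fun i : Fin n => ((v i).1.1, (v i).2)),
               G n (fun i : Fin n => ((v i).1.2, (v i).2))))) :=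
            tsum_congr fun n => lintegral_smul_measure _ _
        _ ≤ ∑' n : ℕ, poissonPMF d n * ((n : ℝ≥0∞) * ∫⁻ q : (ℝ × ℝ) × ℝ,
              ENNReal.ofReal |tau q.1.1 q.2 - tau q.1.2 q.2| ∂(γ.prod signLaw)) :=
            ENNReal.tsum_le_tsum fun n => mul_le_mul_right (inner_cost γ n) _
        _ = (∑' n : ℕ, (n : ℝ≥0∞) * poissonPMF d n) * ∫⁻ q : (ℝ × ℝ) × ℝ,
              ENNReal.ofReal |tau q.1.1 q.2 - tau q.1.2 q.2| ∂(γ.prod signLaw) := by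
            rw [← ENNReal.tsum_mul_right]
            exact tsum_congr fun n => by ring
        _ = (d : ℝ≥0∞) * ∫⁻ q : (ℝ × ℝ) × ℝ,
              ENNReal.ofReal |tau q.1.1 q.2 - tau q.1.2 q.2| ∂(γ.prod signLaw) := by
            rw [poisson_mean]
        _ ≤ (d : ℝ≥0∞) * (2⁻¹ * ∫⁻ p, ENNReal.ofReal |p.1 - p.2| ∂γ) :=
            mul_le_mul_right (coord_bound γ) _
        _ = ((d : ℝ≥0∞) / 2) * ∫⁻ p, ENNReal.ofReal |p.1 - p.2| ∂γ := by
            rw [div_eq_mul_inv, mul_assoc]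
    refine le_trans ?_ hcost
    exact iInf_le_of_le _ (iInf_le_of_le hκ (iInf_le_of_le ⟨hmargL, hmargR⟩ le_rfl))
  have h0 : ((d : ℝ≥0∞) / 2) ≠ 0 := by
    simp [ENNReal.div_eq_zero_iff, hd0.ne']
  have htop : ((d : ℝ≥0∞) / 2) ≠ ∞ :=
    (ENNReal.div_lt_top ENNReal.coe_ne_top (by norm_num)).ne
  have expand : ((d : ℝ≥0∞) / 2) * W1 ρ ρ'
      = ⨅ (γ : Measure (ℝ × ℝ)) (_ : IsProbabilityMeasure γ) (_ : IsCoupling γ ρ ρ'),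
          ((d : ℝ≥0∞) / 2) * ∫⁻ p, ENNReal.ofReal |p.1 - p.2| ∂γ := by
    rw [W1, mul_iInf_aux h0 htop]
    refine iInf_congr fun γ => ?_
    rw [mul_iInf_aux h0 htop]
    refine iInf_congr fun hp => ?_
    rw [mul_iInf_aux h0 htop]
  rw [expand]
  exact le_iInf fun γ => le_iInf fun hp => le_iInf fun hc => key γ hp hc
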